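/- Let G be a non-abelian n-centralizer F-group. Then Z(G) has finite index in G and |G/Z(G)| ≤ (n−2)². -/

import Mathlib

/-- The set of element centralizers of a group `G`. -/
def centSet (G : Type*) [Group G] : Set (Subgroup G) :=
  Set.range fun x : G => Subgroup.centralizer {x}

/-- `G` is an F-group if for non-central `x, y`, `C(x) ≤ C(y)` implies `C(x) = C(y)`. -/
def IsFGroup (G : Type*) [Group G] : Prop :=
  ∀ x y : G, x ∉ Subgroup.center G → y ∉ Subgroup.center G →
    Subgroup.centralizer {x} ≤ Subgroup.centralizer {y} →
    Subgroup.centralizer ({x} : Set G) = Subgroup.centralizer {y}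

namespace Stmt1Aux

variable {G : Type*} [Group G]

/-- abbreviation for the element centralizer -/
abbrev cc (x : G) : Subgroup G := Subgroup.centralizer {x}

lemma mem_cc {x k : G} : k ∈ cc x ↔ k * x = x * k :=
  Subgroup.mem_centralizer_singleton_iff

lemma self_mem_cc (x : G) : x ∈ cc x := mem_cc.2 rfl

lemma cc_mem_centSet (x : G) : cc x ∈ centSet G := ⟨x, rfl⟩

lemma cc_one : cc (1 : G) = ⊤ := by
  rw [Subgroup.eq_top_iff']; intro x; simp [mem_cc]

lemma cc_eq_top {x : G} (hx : x ∈ Subgroup.center G) : cc x = ⊤ := by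
  rw [Subgroup.eq_top_iff']
  intro k
  exact mem_cc.2 (Subgroup.mem_center_iff.1 hx k)

lemma cc_ne_top {x : G} (hx : x ∉ Subgroup.center G) : cc x ≠ ⊤ := by
  intro h
  refine hx (Subgroup.mem_center_iff.2 fun g => ?_)
  have : g ∈ cc x := h ▸ Subgroup.mem_top g
  exact mem_cc.1 this

lemma center_le_cc (x : G) : Subgroup.center G ≤ cc x :=
  Subgroup.center_le_centralizer _

lemma cc_mul_central {x z : G} (hz : z ∈ Subgroup.center G) : cc (x * z) = cc x := by
  ext k
  rw [mem_cc, mem_cc]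
  have hzk : z * k = k * z := (Subgroup.mem_center_iff.1 hz k).symm
  constructor
  · intro hkx
    have : k * x * z = x * k * z := by
      calc k * x * z = k * (x * z) := by rw [mul_assoc]
        _ = x * z * k := hkx
        _ = x * (k * z) := by rw [mul_assoc, hzk]
        _ = x * k * z := by rw [mul_assoc]
    exact mul_right_cancel this
  · intro hkx
    calc k * (x * z) = k * x * z := by rw [mul_assoc]
      _ = x * k * z := by rw [hkx]
      _ = x * (z * k) := by rw [mul_assoc, hzk]
      _ = x * z * k := by rw [← mul_assoc]

/-- a choice of an element outside a subgroup -/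
lemma pick_aux (D : Subgroup G) : ∃ y : G, D ≠ ⊤ → y ∉ D := by
  by_cases h : D = ⊤
  · exact ⟨1, fun hc => absurd h hc⟩
  · obtain ⟨y, hy⟩ : ∃ y, y ∉ D := by
      by_contra hc
      push_neg at hc
      exact h ((Subgroup.eq_top_iff' D).2 hc)
    exact ⟨y, fun _ => hy⟩

noncomputable def pick (D : Subgroup G) : G := (pick_aux D).choose

lemma pick_not_mem {D : Subgroup G} (hD : D ≠ ⊤) : pick D ∉ D :=
  (pick_aux D).choose_spec hD

lemma mul_pick_not_central {g : G} (hg : g ∉ Subgroup.center G) :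
    g * pick (cc g) ∉ Subgroup.center G := by
  set y := pick (cc g) with hy
  intro hc
  have h1 : g * (g * y) = (g * y) * g := Subgroup.mem_center_iff.1 hc g
  have h2 : g * y = y * g := by
    have : g * (g * y) = g * (y * g) := by
      rw [h1, mul_assoc]
    exact mul_left_cancel this
  exact pick_not_mem (cc_ne_top hg) (mem_cc.2 h2.symm)

lemma pick_not_central {g : G} (hg : g ∉ Subgroup.center G) :
    pick (cc g) ∉ Subgroup.center G := fun hc =>
  pick_not_mem (cc_ne_top hg) (center_le_cc g hc)

/-- second component differs from the first -/
lemma snd_ne_fst {g : G} (hg : g ∉ Subgroup.center G) :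
    cc (g * pick (cc g)) ≠ cc g := by
  set y := pick (cc g) with hy
  intro hEq
  have h1 : g * y ∈ cc g := hEq ▸ self_mem_cc (g * y)
  have hcom : (g * y) * g = g * (g * y) := mem_cc.1 h1
  have : g * y = y * g := by
    have : g * ((g * y) * g⁻¹) = g * y := by
      rw [← mul_assoc, ← hcom]
      group
    have h2 : (g * y) * g⁻¹ = y := mul_left_cancel this
    calc g * y = ((g * y) * g⁻¹) * g := by group
      _ = y * g := by rw [h2]
  exact pick_not_mem (cc_ne_top hg) (mem_cc.2 this.symm)

/-- second component differs from the centralizer of the picked element -/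
lemma snd_ne_pick {g : G} (hg : g ∉ Subgroup.center G) :
    cc (g * pick (cc g)) ≠ cc (pick (cc g)) := by
  set y := pick (cc g) with hy
  intro hEq
  have h1 : y ∈ cc (g * y) := hEq ▸ self_mem_cc y
  have hcom : Commute y (g * y) := mem_cc.1 h1
  have : Commute y g := by
    have := hcom.mul_right (Commute.refl y).inv_right
    simpa [mul_assoc] using this
  exact pick_not_mem (cc_ne_top hg) (mem_cc.2 this.eq)

/-- the key injectivity lemma -/
lemma key (hF : IsFGroup G) {g h y : G} (hg : g ∉ Subgroup.center G)
    (hy : y ∉ cc g) (hgh : cc g = cc h) (hghy : cc (g * y) = cc (h * y)) :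
    g⁻¹ * h ∈ Subgroup.center G := by
  have hcomm_gh : Commute h g := mem_cc.1 (hgh ▸ self_mem_cc h)
  have hgy_nc : g * y ∉ Subgroup.center G := by
    intro hc
    have h1 : g * (g * y) = (g * y) * g := Subgroup.mem_center_iff.1 hc g
    have h2 : g * y = y * g := by
      have : g * (g * y) = g * (y * g) := by rw [h1, mul_assoc]
      exact mul_left_cancel this
    exact hy (mem_cc.2 h2.symm)
  -- u = g * h⁻¹
  have hCle : cc (g * y) ≤ cc (g * h⁻¹) := by
    intro d hd
    have h1 : Commute d (g * y) := mem_cc.1 hd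
    have h2 : Commute d (h * y) := mem_cc.1 (hghy ▸ hd)
    have h3 : Commute d ((g * y) * (h * y)⁻¹) := h1.mul_right h2.inv_right
    have : (g * y) * (h * y)⁻¹ = g * h⁻¹ := by group
    exact mem_cc.2 (this ▸ h3).eq
  have hu : g * h⁻¹ ∈ Subgroup.center G := by
    by_contra hu_nc
    have heq : cc (g * y) = cc (g * h⁻¹) := hF (g * y) (g * h⁻¹) hgy_nc hu_nc hCle
    have hgmem : g ∈ cc (g * h⁻¹) := by
      have : Commute g (g * h⁻¹) := (Commute.refl g).mul_right hcomm_gh.symm.inv_right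
      exact mem_cc.2 this.eq
    have hgmem2 : g ∈ cc (g * y) := heq ▸ hgmem
    have hcom : Commute g (g * y) := mem_cc.1 hgmem2
    have : Commute g y := by
      have h4 := (Commute.refl g).inv_right.mul_right hcom
      simpa using h4
    exact hy (mem_cc.2 this.symm.eq)
  -- convert g * h⁻¹ ∈ Z to g⁻¹ * h ∈ Z
  have hinv : h * g⁻¹ ∈ Subgroup.center G := by
    have := (Subgroup.center G).inv_mem hu
    simpa using this
  have : g⁻¹ * h = h * g⁻¹ := by
    have e := Subgroup.mem_center_iff.1 hinv g⁻¹
    calc g⁻¹ * h = (g⁻¹ * (h * g⁻¹)) * g := by group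
      _ = ((h * g⁻¹) * g⁻¹) * g := by rw [e]
      _ = h * g⁻¹ := by group
  rw [this]
  exact hinv

end Stmt1Aux

open Stmt1Aux in
/-- A non-abelian `n`-centralizer F-group satisfies `|G/Z(G)| ≤ (n-2)²`. -/
theorem stmt1 (G : Type*) [Group G] (hG : ¬∀ a b : G, a * b = b * a) (n : ℕ)
    (hFgroup : IsFGroup G)
    (hfin : (centSet G).Finite) (hcard : (centSet G).ncard = n) :
    (Subgroup.center G).FiniteIndex ∧
      Nat.card (G ⧸ Subgroup.center G) ≤ (n - 2) ^ 2 := by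
  classical
  set Z := Subgroup.center G with hZ
  set 𝒮 : Finset (Subgroup G) := hfin.toFinset with h𝒮
  have h𝒮card : 𝒮.card = n := by
    rw [← hcard, Set.ncard_eq_toFinset_card _ hfin]
  have htop_mem : (⊤ : Subgroup G) ∈ 𝒮 := by
    rw [h𝒮, Set.Finite.mem_toFinset]
    have h1 : cc (1 : G) ∈ centSet G := cc_mem_centSet 1
    rwa [cc_one] at h1
  have hmem𝒮 : ∀ x : G, cc x ∈ 𝒮 := fun x => by
    rw [h𝒮, Set.Finite.mem_toFinset]; exact cc_mem_centSet x
  -- n ≥ 3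
  push_neg at hG
  obtain ⟨a, b, hab⟩ := hG
  have ha : a ∉ Z := fun h => hab (Subgroup.mem_center_iff.1 h b).symm
  have hb : b ∉ Z := fun h => hab (Subgroup.mem_center_iff.1 h a)
  have hccab : cc a ≠ cc b := by
    intro h
    have : a ∈ cc b := by rw [← h]; exact self_mem_cc a
    exact hab (mem_cc.1 this)
  have hn3 : 3 ≤ n := by
    have hsub : ({⊤, cc a, cc b} : Finset (Subgroup G)) ⊆ 𝒮 := by
      intro D hD
      simp only [Finset.mem_insert, Finset.mem_singleton] at hD
      rcases hD with rfl | rfl | rfl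
      · exact htop_mem
      · exact hmem𝒮 a
      · exact hmem𝒮 b
    have hc3 : ({⊤, cc a, cc b} : Finset (Subgroup G)).card = 3 := by
      rw [Finset.card_insert_of_notMem, Finset.card_insert_of_notMem,
        Finset.card_singleton]
      · simp [hccab]
      · simp only [Finset.mem_insert, Finset.mem_singleton]
        push_neg
        exact ⟨(cc_ne_top ha).symm, (cc_ne_top hb).symm⟩
    calc 3 = ({⊤, cc a, cc b} : Finset (Subgroup G)).card := hc3.symm
      _ ≤ 𝒮.card := Finset.card_le_card hsub
      _ = n := h𝒮card
  -- the target finset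
  set T : Finset (Subgroup G × Subgroup G) :=
    insert (⊤, ⊤) ((𝒮.erase ⊤).biUnion fun D =>
      {D} ×ˢ (((𝒮.erase ⊤).erase D).erase (cc (pick D)))) with hT
  -- the function
  set f : G → Subgroup G × Subgroup G :=
    fun g => if g ∈ Z then (⊤, ⊤) else (cc g, cc (g * pick (cc g))) with hf
  have hrange : ∀ g : G, f g ∈ T := by
    intro g
    by_cases hg : g ∈ Z
    · rw [hf]; simp only [if_pos hg, hT]; exact Finset.mem_insert_self _ _
    · rw [hf]
      simp only [if_neg hg, hT]
      apply Finset.mem_insert_of_mem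
      apply Finset.mem_biUnion.2
      refine ⟨cc g, ?_, ?_⟩
      · exact Finset.mem_erase.2 ⟨cc_ne_top hg, hmem𝒮 g⟩
      · rw [Finset.mem_product]
        constructor
        · exact Finset.mem_singleton_self _
        · refine Finset.mem_erase.2 ⟨snd_ne_pick hg, ?_⟩
          refine Finset.mem_erase.2 ⟨snd_ne_fst hg, ?_⟩
          exact Finset.mem_erase.2 ⟨cc_ne_top (mul_pick_not_central hg), hmem𝒮 _⟩
  have hdesc : ∀ g h : G, g⁻¹ * h ∈ Z → f g = f h := by
    intro g h hgh
    have hh : h = g * (g⁻¹ * h) := (mul_inv_cancel_left g h).symm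
    by_cases hg : g ∈ Z
    · have hhZ : h ∈ Z := by rw [hh]; exact Z.mul_mem hg hgh
      rw [hf]; simp [hg, hhZ]
    · have hhZ : h ∉ Z := by
        intro hc
        exact hg (by
          have : g = h * (g⁻¹ * h)⁻¹ := by
            rw [mul_inv_rev, inv_inv, mul_inv_cancel_left]
          rw [this]
          exact Z.mul_mem hc (Z.inv_mem hgh))
      have hcc : cc h = cc g := by rw [hh]; exact cc_mul_central hgh
      have hccy : cc (h * pick (cc h)) = cc (g * pick (cc g)) := by
        rw [hcc, hh]
        have : g * (g⁻¹ * h) * pick (cc g) = (g * pick (cc g)) * (g⁻¹ * h) := by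
          have hcomm : (g⁻¹ * h) * pick (cc g) = pick (cc g) * (g⁻¹ * h) :=
            (Subgroup.mem_center_iff.1 hgh (pick (cc g))).symm
          rw [mul_assoc, hcomm, ← mul_assoc]
        rw [this]
        exact cc_mul_central hgh
      rw [hf]
      simp only [if_neg hg, if_neg hhZ]
      exact Prod.ext hcc.symm hccy.symm
  have hinj : ∀ g h : G, f g = f h → g⁻¹ * h ∈ Z := by
    intro g h hfgh
    by_cases hg : g ∈ Z
    · by_cases hh : h ∈ Z
      · exact Z.mul_mem (Z.inv_mem hg) hh
      · exfalso
        rw [hf] at hfgh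
        simp only [if_pos hg, if_neg hh] at hfgh
        exact cc_ne_top hh (congrArg Prod.fst hfgh).symm
    · by_cases hh : h ∈ Z
      · exfalso
        rw [hf] at hfgh
        simp only [if_pos hh, if_neg hg] at hfgh
        exact cc_ne_top hg (congrArg Prod.fst hfgh)
      · rw [hf] at hfgh
        simp only [if_neg hg, if_neg hh] at hfgh
        have h1 : cc g = cc h := congrArg Prod.fst hfgh
        have h2 : cc (g * pick (cc g)) = cc (h * pick (cc h)) :=
          congrArg Prod.snd hfgh
        rw [← h1] at h2
        exact key hFgroup hg (pick_not_mem (cc_ne_top hg)) h1 h2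
  -- build injection from the quotient into ↥T
  let fbar : G ⧸ Z → {p // p ∈ T} := fun q =>
    Quotient.liftOn' q (fun g => (⟨f g, hrange g⟩ : {p // p ∈ T}))
      (fun g h hgh => Subtype.ext (hdesc g h (QuotientGroup.leftRel_apply.1 hgh)))
  have hfbar_inj : Function.Injective fbar := by
    intro q1 q2
    refine Quotient.inductionOn₂' q1 q2 fun g h hEq => ?_
    have : f g = f h := congrArg Subtype.val hEq
    exact Quotient.sound' (QuotientGroup.leftRel_apply.2 (hinj g h this))
  haveI : Finite (G ⧸ Z) := Finite.of_injective fbar hfbar_inj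
  constructor
  · exact Subgroup.finiteIndex_of_finite_quotient
  · have hle : Nat.card (G ⧸ Z) ≤ Nat.card {p // p ∈ T} :=
      Nat.card_le_card_of_injective fbar hfbar_inj
    rw [Nat.card_eq_finsetCard T] at hle
    -- bound T.card
    have hTcard : T.card ≤ 1 + (n - 1) * (n - 3) := by
      rw [hT]
      refine le_trans (Finset.card_insert_le _ _) ?_
      rw [add_comm]
      refine Nat.add_le_add_left ?_ 1
      refine le_trans (Finset.card_biUnion_le) ?_
      have hbound : ∀ D ∈ 𝒮.erase ⊤,
          ({D} ×ˢ (((𝒮.erase ⊤).erase D).erase (cc (pick D)))).card ≤ n - 3 := by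
        intro D hD
        rw [Finset.card_product, Finset.card_singleton, one_mul]
        obtain ⟨hDne, hDmem⟩ := Finset.mem_erase.1 hD
        -- pick D is not in D, and D is a centralizer so Z ≤ D
        obtain ⟨x, hx⟩ : D ∈ centSet G := (Set.Finite.mem_toFinset hfin).1 hDmem
        have hpickD : pick D ∉ D := pick_not_mem hDne
        have hx' : cc x = D := hx
        have hpick_nc : pick D ∉ Z := fun hc => by
          have h2 : pick D ∈ cc x := center_le_cc x hc
          rw [hx'] at h2
          exact hpickD h2
        have hccpick_ne_D : cc (pick D) ≠ D := fun hEq => by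
          have := self_mem_cc (pick D)
          rw [hEq] at this
          exact hpickD this
        have hm : cc (pick D) ∈ (𝒮.erase ⊤).erase D :=
          Finset.mem_erase.2 ⟨hccpick_ne_D,
            Finset.mem_erase.2 ⟨cc_ne_top hpick_nc, hmem𝒮 _⟩⟩
        rw [Finset.card_erase_of_mem hm,
          Finset.card_erase_of_mem (Finset.mem_erase.2 ⟨hDne, hDmem⟩),
          Finset.card_erase_of_mem htop_mem, h𝒮card]
        omega
      calc (Finset.sum (𝒮.erase ⊤) fun D =>
            ({D} ×ˢ (((𝒮.erase ⊤).erase D).erase (cc (pick D)))).card)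
          ≤ Finset.sum (𝒮.erase ⊤) (fun _ => n - 3) :=
            Finset.sum_le_sum hbound
        _ = (𝒮.erase ⊤).card * (n - 3) := by rw [Finset.sum_const, smul_eq_mul]
        _ ≤ (n - 1) * (n - 3) := by
            rw [Finset.card_erase_of_mem htop_mem, h𝒮card]
    refine le_trans hle (le_trans hTcard ?_)
    obtain ⟨m, rfl⟩ : ∃ m, n = m + 3 := ⟨n - 3, by omega⟩
    have e1 : m + 3 - 1 = m + 2 := by omega
    have e2 : m + 3 - 3 = m := by omega
    have e3 : m + 3 - 2 = m + 1 := by omega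
    rw [e1, e2, e3]
    nlinarith
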